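/- arXiv:2405.12883 — 6 statements merged into one kernel-verified Lean document; each statement's English description precedes it below -/
import Mathlib

section
/- Let Θ ∈ (0, 2π), α = e^{-iΘ}, and d ∈ ℝ with d ∉ (π/Θ)ℤ. Then for every real polynomial Q ∈ ℝ[T] there exists a unique real polynomial P ∈ ℝ[T] such that for all real t, Im(α^d · P(t - iΘ)) = Q(t), where P(t - iΘ) denotes evaluation of P at the complex number t - iΘ and α^d = e^{-idΘ}. Moreover deg P = deg Q. -/
open Polynomial

/-- The "imaginary part" of a complex polynomial, coefficientwise. -/
noncomputable def imPoly (p : Polynomial ℂ) : Polynomial ℝ :=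
  ⟨AddMonoidAlgebra.ofCoeff (Finsupp.mapRange Complex.im Complex.zero_im p.toFinsupp.coeff)⟩

lemma imPoly_coeff (p : Polynomial ℂ) (n : ℕ) : (imPoly p).coeff n = (p.coeff n).im := rfl

lemma imPoly_degree_le (p : Polynomial ℂ) : (imPoly p).degree ≤ p.degree := by
  rw [degree_le_iff_coeff_zero]
  intro m hm
  rw [imPoly_coeff, coeff_eq_zero_of_degree_lt hm, Complex.zero_im]

lemma imPoly_eval (p : Polynomial ℂ) (t : ℝ) :
    (imPoly p).eval t = (p.eval (t : ℂ)).im := by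
  have hdeg : (imPoly p).natDegree < p.natDegree + 1 :=
    Nat.lt_succ_of_le (natDegree_le_natDegree (imPoly_degree_le p))
  rw [eval_eq_sum_range' hdeg, eval_eq_sum_range' (Nat.lt_succ_self p.natDegree),
    Complex.im_sum]
  refine Finset.sum_congr rfl fun i _ => ?_
  rw [imPoly_coeff, ← Complex.ofReal_pow, Complex.mul_im, Complex.ofReal_im,
    Complex.ofReal_re, mul_zero, zero_add]

/-- The key linear operator `P ↦ (t ↦ Im (z * P(t - w)))` as a map on real polynomials. -/
noncomputable def Lmap (z w : ℂ) : Polynomial ℝ →ₗ[ℝ] Polynomial ℝ where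
  toFun P := imPoly (Polynomial.C z * ((P.map (algebraMap ℝ ℂ)).comp (X - Polynomial.C w)))
  map_add' P Q := by
    ext n
    simp [imPoly_coeff, Polynomial.map_add, add_comp, mul_add]
  map_smul' r P := by
    ext n
    have h : (r • P).map (algebraMap ℝ ℂ) = (r : ℂ) • (P.map (algebraMap ℝ ℂ)) := by
      ext m
      simp [coeff_map, Complex.ofReal_mul]
    simp only [h, smul_comp, RingHom.id_apply, coeff_smul, imPoly_coeff, mul_smul_comm,
      smul_eq_mul, Complex.mul_im, Complex.ofReal_im, Complex.ofReal_re, zero_mul, add_zero]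

lemma Lmap_eval (z w : ℂ) (P : Polynomial ℝ) (t : ℝ) :
    (Lmap z w P).eval t = (z * (P.map (algebraMap ℝ ℂ)).eval ((t : ℂ) - w)).im := by
  show (imPoly _).eval t = _
  rw [imPoly_eval]
  simp [eval_comp]

lemma Lmap_coeff (z w : ℂ) (P : Polynomial ℝ) (n : ℕ) :
    (Lmap z w P).coeff n =
      (z * ((P.map (algebraMap ℝ ℂ)).comp (X - Polynomial.C w)).coeff n).im := by
  show (imPoly _).coeff n = _
  rw [imPoly_coeff, coeff_C_mul]

lemma Lmap_degree {z : ℂ} (hz : z.im ≠ 0) (w : ℂ) (P : Polynomial ℝ) :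
    (Lmap z w P).degree = P.degree := by
  rcases eq_or_ne P 0 with rfl | hP
  · rw [map_zero]
  · have hinj : Function.Injective (algebraMap ℝ ℂ) := (algebraMap ℝ ℂ).injective
    set S := (P.map (algebraMap ℝ ℂ)).comp (X - Polynomial.C w) with hS
    have hnm : (P.map (algebraMap ℝ ℂ)).natDegree = P.natDegree :=
      natDegree_map_eq_of_injective hinj P
    have hnS : S.natDegree = P.natDegree := by
      rw [hS, natDegree_comp, natDegree_X_sub_C, mul_one, hnm]
    have hlS : S.leadingCoeff = (P.leadingCoeff : ℂ) := by
      rw [hS, leadingCoeff_comp (by rw [natDegree_X_sub_C]; exact one_ne_zero),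
        (monic_X_sub_C w).leadingCoeff, one_pow, mul_one, leadingCoeff, hnm, coeff_map]
      rfl
    have h1 : (Lmap z w P).coeff P.natDegree ≠ 0 := by
      rw [Lmap_coeff, ← hnS, ← leadingCoeff, hlS, Complex.mul_im, Complex.ofReal_im,
        Complex.ofReal_re, mul_zero, zero_add]
      exact mul_ne_zero hz (by simpa [leadingCoeff_ne_zero] using hP)
    have h2 : (Lmap z w P).degree ≤ (P.natDegree : WithBot ℕ) := by
      rw [degree_le_iff_coeff_zero]
      intro m hm
      have hm' : P.natDegree < m := by exact_mod_cast hm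
      rw [Lmap_coeff, coeff_eq_zero_of_natDegree_lt (by rw [hnS]; exact hm'), mul_zero,
        Complex.zero_im]
    rw [degree_eq_natDegree hP]
    exact le_antisymm h2 (le_degree_of_ne_zero h1)

lemma Lmap_inj {z : ℂ} (hz : z.im ≠ 0) (w : ℂ) : Function.Injective (Lmap z w) := by
  intro p q h
  have h0 : Lmap z w (p - q) = 0 := by rw [map_sub, h, sub_self]
  have hdeg := Lmap_degree hz w (p - q)
  rw [h0, degree_zero] at hdeg
  exact sub_eq_zero.mp (degree_eq_bot.mp hdeg.symm)

lemma Lmap_surj {z : ℂ} (hz : z.im ≠ 0) (w : ℂ) (Q : Polynomial ℝ) :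
    ∃ P, Lmap z w P = Q := by
  set n := Q.natDegree + 1 with hn
  haveI : FiniteDimensional ℝ (degreeLT ℝ n) := Module.Finite.equiv (degreeLTEquiv ℝ n).symm
  have hmem : ∀ p ∈ degreeLT ℝ n, Lmap z w p ∈ degreeLT ℝ n := by
    intro p hp
    rw [mem_degreeLT] at hp ⊢
    rwa [Lmap_degree hz w]
  have hinj : Function.Injective ((Lmap z w).restrict hmem) := by
    intro x y hxy
    apply Subtype.ext
    apply Lmap_inj hz w
    simpa [LinearMap.restrict_apply] using congrArg Subtype.val hxy
  have hQ : Q ∈ degreeLT ℝ n := by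
    rw [mem_degreeLT]
    exact lt_of_le_of_lt degree_le_natDegree (by exact_mod_cast Nat.lt_succ_self _)
  obtain ⟨P, hP⟩ := (LinearMap.injective_iff_surjective.mp hinj) ⟨Q, hQ⟩
  exact ⟨P.1, by simpa [LinearMap.restrict_apply] using congrArg Subtype.val hP⟩

/-- Lemma 2.2 (case 1): for `d ∉ (π/Θ)ℤ`, the equation
`Im(α^d · P(t - iΘ)) = Q(t)` has a unique real-polynomial solution `P`,
and `deg P = deg Q`. Here `α^d = e^{-idΘ}`. -/
theorem stmt0 (Θ d : ℝ) (hΘ : 0 < Θ) (hΘ2 : Θ < 2 * Real.pi)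
    (hd : ¬ ∃ n : ℤ, d = (Real.pi / Θ) * n) (Q : Polynomial ℝ) :
    (∃! P : Polynomial ℝ, ∀ t : ℝ,
      (Complex.exp (-(Complex.I * (d : ℂ) * (Θ : ℂ))) *
        (P.map (algebraMap ℝ ℂ)).eval ((t : ℂ) - Complex.I * (Θ : ℂ))).im = Q.eval t) ∧
    (∀ P : Polynomial ℝ,
      (∀ t : ℝ,
        (Complex.exp (-(Complex.I * (d : ℂ) * (Θ : ℂ))) *
          (P.map (algebraMap ℝ ℂ)).eval ((t : ℂ) - Complex.I * (Θ : ℂ))).im = Q.eval t) →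
      P.degree = Q.degree) := by
  set z := Complex.exp (-(Complex.I * (d : ℂ) * (Θ : ℂ))) with hzdef
  set w := Complex.I * (Θ : ℂ) with hwdef
  have hz : z.im ≠ 0 := by
    have harg : -(Complex.I * (d : ℂ) * (Θ : ℂ)) = ((-(d * Θ) : ℝ) : ℂ) * Complex.I := by
      push_cast; ring
    rw [hzdef, harg, Complex.exp_ofReal_mul_I_im, Real.sin_neg, neg_ne_zero]
    intro h
    obtain ⟨n, hn⟩ := Real.sin_eq_zero_iff.mp h
    apply hd
    refine ⟨n, ?_⟩
    field_simp
    linarith [hn]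
  have key : ∀ P : Polynomial ℝ,
      (∀ t : ℝ, (z * (P.map (algebraMap ℝ ℂ)).eval ((t : ℂ) - w)).im = Q.eval t)
      ↔ Lmap z w P = Q := by
    intro P
    constructor
    · intro h
      apply Polynomial.funext
      intro t
      rw [Lmap_eval]; exact h t
    · intro h t
      rw [← Lmap_eval z w, h]
  constructor
  · obtain ⟨P, hP⟩ := Lmap_surj hz w Q
    refine ⟨P, (key P).mpr hP, fun P' hP' => ?_⟩
    exact Lmap_inj hz w (by rw [(key P').mp hP', hP])
  · intro P hP
    rw [← (key P).mp hP, Lmap_degree hz w]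
end

section
/- Let a < b be reals, n ≥ 1, and let (d_i, ℓ_i), i = 1,…,n, be n distinct pairs in ℝ × ℕ. Let f_1, …, f_n be nonzero continuous functions [a,b] → ℂ, and define φ(r, θ) = Σ_{i=1}^n r^{d_i} (ln r)^{ℓ_i} f_i(θ) for r > 0, θ ∈ [a,b]. Then there exist a nontrivial closed subinterval I ⊆ [a,b], a constant c > 0, and r₂ ∈ ℝ such that for all r > r₂ and all θ ∈ I, |φ(r,θ)| > c · r^{max_j d_j}. -/
open Set

open Asymptotics Filter Real in
/-- Key asymptotic fact: each non-dominant term is little-o of the dominant one. -/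
lemma stmt4_aux {di D : ℝ} {li L : ℕ} (h : di < D ∨ (di = D ∧ li < L)) :
    (fun r : ℝ => r ^ di * Real.log r ^ li) =o[atTop]
      (fun r : ℝ => r ^ D * Real.log r ^ L) := by
  have hbig : (fun r : ℝ => r ^ D) =O[atTop] (fun r : ℝ => r ^ D * Real.log r ^ L) := by
    apply IsBigO.of_bound 1
    filter_upwards [eventually_ge_atTop (Real.exp 1)] with r hr
    have hr1 : (1:ℝ) ≤ r := le_trans (by nlinarith [Real.exp_one_gt_d9]) hr
    have hlog : (1:ℝ) ≤ Real.log r := by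
      rw [← Real.log_exp 1]; exact Real.log_le_log (Real.exp_pos 1) hr
    have h1 : (1:ℝ) ≤ Real.log r ^ L := by simpa using pow_le_pow_left₀ zero_le_one hlog L
    have hrD : (0:ℝ) ≤ r ^ D := (Real.rpow_pos_of_pos (by linarith) D).le
    rw [Real.norm_eq_abs, Real.norm_eq_abs, abs_of_nonneg hrD,
      abs_of_nonneg (by positivity), one_mul]
    nlinarith
  rcases h with h | ⟨rfl, h⟩
  · -- di < D : log ^ li = o(r^(D - di)), multiply by r^di
    have h1 : (fun r : ℝ => Real.log r ^ li) =o[atTop]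
        (fun r : ℝ => r ^ (D - di)) := by
      have := isLittleO_log_rpow_rpow_atTop (li : ℝ) (sub_pos.mpr h)
      refine this.congr' ?_ (EventuallyEq.refl _ _)
      filter_upwards [eventually_ge_atTop (1:ℝ)] with r hr
      rw [Real.rpow_natCast]
    have h2 : (fun r : ℝ => r ^ di * Real.log r ^ li) =o[atTop]
        (fun r : ℝ => r ^ di * r ^ (D - di)) :=
      (isBigO_refl (fun r : ℝ => r ^ di) atTop).mul_isLittleO h1
    have h3 : (fun r : ℝ => r ^ di * r ^ (D - di)) =ᶠ[atTop]
        (fun r : ℝ => r ^ D) := by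
      filter_upwards [eventually_gt_atTop (0:ℝ)] with r hr
      rw [← Real.rpow_add hr]; ring_nf
    exact (h2.congr' (EventuallyEq.refl _ _) h3).trans_isBigO hbig
  · -- di = D, li < L : log ^ li = o(log ^ L)
    have h1 : (fun r : ℝ => Real.log r ^ li) =o[atTop]
        (fun r : ℝ => Real.log r ^ L) :=
      (Asymptotics.isLittleO_pow_pow_atTop_of_lt h).comp_tendsto Real.tendsto_log_atTop
    exact (isBigO_refl (fun r : ℝ => r ^ di) atTop).mul_isLittleO h1

/-- Lemma 3.2 (behavior at infinity): for `φ(r,θ) = Σᵢ r^{dᵢ} (ln r)^{ℓᵢ} fᵢ(θ)`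
with distinct pairs `(dᵢ,ℓᵢ)` and nonzero continuous `fᵢ` on `[a,b]`, there are
a nontrivial closed subinterval `I ⊆ [a,b]`, `c > 0` and `r₂` such that
`|φ(r,θ)| > c · r^{max dⱼ}` for all `r > r₂`, `θ ∈ I`. -/
theorem stmt4 (a b : ℝ) (hab : a < b) (n : ℕ) (hn : 0 < n)
    (d : Fin n → ℝ) (ℓ : Fin n → ℕ)
    (hdist : Function.Injective (fun i => (d i, ℓ i)))
    (f : Fin n → ℝ → ℂ)
    (hfc : ∀ i, ContinuousOn (f i) (Set.Icc a b))
    (hfne : ∀ i, ∃ θ ∈ Set.Icc a b, f i θ ≠ 0) :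
    ∃ a' b' : ℝ, a ≤ a' ∧ a' < b' ∧ b' ≤ b ∧ ∃ c : ℝ, 0 < c ∧ ∃ r₂ : ℝ,
      ∀ r : ℝ, r₂ < r → ∀ θ ∈ Set.Icc a' b',
        c * r ^ (Finset.univ.sup'
            (Finset.univ_nonempty_iff.mpr (Fin.pos_iff_nonempty.mp hn)) d)
          < ‖∑ i, ((r ^ d i * Real.log r ^ ℓ i : ℝ) : ℂ) * f i θ‖ := by
  classical
  have hne : (Finset.univ : Finset (Fin n)).Nonempty :=
    Finset.univ_nonempty_iff.mpr (Fin.pos_iff_nonempty.mp hn)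
  set D := Finset.univ.sup'
      (Finset.univ_nonempty_iff.mpr (Fin.pos_iff_nonempty.mp hn)) d with hD
  -- the set of indices achieving the max degree
  set T := Finset.univ.filter (fun i => d i = D) with hT
  have hTne : T.Nonempty := by
    obtain ⟨i, _, hi⟩ := Finset.exists_mem_eq_sup' hne d
    exact ⟨i, Finset.mem_filter.mpr ⟨Finset.mem_univ i, hi.symm⟩⟩
  set L := T.sup' hTne ℓ with hL
  obtain ⟨i₀, hi₀T, hi₀⟩ := Finset.exists_mem_eq_sup' hTne ℓ
  have hdi₀ : d i₀ = D := (Finset.mem_filter.mp hi₀T).2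
  have hli₀ : ℓ i₀ = L := hi₀.symm
  have hdle : ∀ i, d i ≤ D := fun i => Finset.le_sup' d (Finset.mem_univ i)
  have hkey : ∀ i, i ≠ i₀ → d i < D ∨ (d i = D ∧ ℓ i < L) := by
    intro i hi
    rcases lt_or_eq_of_le (hdle i) with h | h
    · exact Or.inl h
    · refine Or.inr ⟨h, ?_⟩
      have hle : ℓ i ≤ L := Finset.le_sup' ℓ (Finset.mem_filter.mpr ⟨Finset.mem_univ i, h⟩)
      rcases lt_or_eq_of_le hle with h' | h'
      · exact h'
      · exact absurd (hdist (by simp [h, h', hdi₀, hli₀] : (d i, ℓ i) = (d i₀, ℓ i₀))) hi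
  -- uniform bound M on all |f i|
  have hM : ∀ i, ∃ C, ∀ θ ∈ Set.Icc a b, ‖f i θ‖ ≤ C := by
    intro i
    obtain ⟨C, hC⟩ := isCompact_Icc.exists_bound_of_continuousOn (hfc i)
    exact ⟨C, fun θ hθ => hC θ hθ⟩
  choose C hC using hM
  set M : ℝ := max 1 (Finset.univ.sup' hne C) with hMdef
  have hM1 : (1:ℝ) ≤ M := le_max_left _ _
  have hM0 : (0:ℝ) < M := lt_of_lt_of_le one_pos hM1
  have hfM : ∀ i, ∀ θ ∈ Set.Icc a b, ‖f i θ‖ ≤ M := fun i θ hθ =>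
    le_trans (hC i θ hθ) (le_trans (Finset.le_sup' C (Finset.mem_univ i)) (le_max_right _ _))
  -- find a subinterval where |f i₀| > m
  obtain ⟨θ₀, hθ₀, hθ₀ne⟩ := hfne i₀
  set m : ℝ := ‖f i₀ θ₀‖ / 2 with hm
  have hm0 : 0 < m := by
    have := norm_pos_iff.mpr hθ₀ne
    positivity
  have hcont : ContinuousWithinAt (fun θ => ‖f i₀ θ‖) (Set.Icc a b) θ₀ :=
    (continuous_norm.continuousAt.comp_continuousWithinAt ((hfc i₀) θ₀ hθ₀))
  have hev : ∀ᶠ θ in nhdsWithin θ₀ (Set.Icc a b), m < ‖f i₀ θ‖ := by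
    apply hcont.eventually_const_lt
    rw [hm]; linarith [norm_pos_iff.mpr hθ₀ne]
  rw [eventually_nhdsWithin_iff] at hev
  rw [Metric.eventually_nhds_iff] at hev
  obtain ⟨δ, hδ0, hδ⟩ := hev
  set a' := max a (θ₀ - δ/2) with ha'
  set b' := min b (θ₀ + δ/2) with hb'
  have hθ₀1 := hθ₀.1
  have hθ₀2 := hθ₀.2
  have ha'b' : a' < b' := by
    rw [ha', hb', max_lt_iff, lt_min_iff, lt_min_iff]
    refine ⟨⟨hab, ?_⟩, ?_, ?_⟩ <;> linarith
  have hsub : Set.Icc a' b' ⊆ Set.Icc a b :=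
    Set.Icc_subset_Icc (le_max_left _ _) (min_le_left _ _)
  have hflow : ∀ θ ∈ Set.Icc a' b', m < ‖f i₀ θ‖ := by
    intro θ hθ
    refine hδ ?_ (hsub hθ)
    have h1 : θ₀ - δ/2 ≤ θ := le_trans (le_max_right _ _) hθ.1
    have h2 : θ ≤ θ₀ + δ/2 := le_trans hθ.2 (min_le_right _ _)
    rw [Real.dist_eq, abs_sub_lt_iff]
    constructor <;> linarith
  -- little-o control of the remaining terms
  have hsum : (fun r : ℝ => ∑ i ∈ Finset.univ.erase i₀, r ^ d i * Real.log r ^ ℓ i)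
      =o[Filter.atTop] (fun r : ℝ => r ^ D * Real.log r ^ L) :=
    Asymptotics.IsLittleO.fun_sum (fun i hi =>
      stmt4_aux (hkey i (Finset.ne_of_mem_erase hi)))
  have hev2 := hsum.def (show (0:ℝ) < m / (2 * M) by positivity)
  have hev3 : ∀ᶠ r : ℝ in Filter.atTop,
      (‖∑ i ∈ Finset.univ.erase i₀, r ^ d i * Real.log r ^ ℓ i‖
        ≤ m / (2 * M) * ‖r ^ D * Real.log r ^ L‖) ∧ Real.exp 1 ≤ r :=
    hev2.and (Filter.eventually_ge_atTop (Real.exp 1))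
  rw [Filter.eventually_atTop] at hev3
  obtain ⟨r₂, hr₂⟩ := hev3
  refine ⟨a', b', le_max_left _ _, ha'b', min_le_left _ _, m / 2, by positivity, r₂, ?_⟩
  intro r hr θ hθ
  obtain ⟨hsmall, hre⟩ := hr₂ r hr.le
  have hr1 : (1:ℝ) < r := lt_of_lt_of_le (by nlinarith [Real.exp_one_gt_d9]) hre
  have hr0 : (0:ℝ) < r := lt_trans one_pos hr1
  have hlog1 : (1:ℝ) ≤ Real.log r := by
    rw [← Real.log_exp 1]; exact Real.log_le_log (Real.exp_pos 1) hre
  have hlogL : (1:ℝ) ≤ Real.log r ^ L := by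
    simpa using pow_le_pow_left₀ zero_le_one hlog1 L
  have hrD : (0:ℝ) < r ^ D := Real.rpow_pos_of_pos hr0 D
  set X : ℝ := r ^ D * Real.log r ^ L with hX
  have hX0 : 0 < X := by positivity
  have hXge : r ^ D ≤ X := by
    rw [hX]; nlinarith
  -- coefficients are nonnegative
  have hcoeff : ∀ i, 0 ≤ r ^ d i * Real.log r ^ ℓ i := by
    intro i
    have := Real.rpow_pos_of_pos hr0 (d i)
    positivity
  -- bound the sum of small terms
  have hsum_le : (∑ i ∈ Finset.univ.erase i₀, r ^ d i * Real.log r ^ ℓ i)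
      ≤ m / (2 * M) * X := by
    have h1 : (∑ i ∈ Finset.univ.erase i₀, r ^ d i * Real.log r ^ ℓ i)
        ≤ ‖∑ i ∈ Finset.univ.erase i₀, r ^ d i * Real.log r ^ ℓ i‖ :=
      le_abs_self _
    have h2 : ‖r ^ D * Real.log r ^ L‖ = X := by
      rw [Real.norm_eq_abs, abs_of_nonneg hX0.le]
    calc (∑ i ∈ Finset.univ.erase i₀, r ^ d i * Real.log r ^ ℓ i)
        ≤ ‖∑ i ∈ Finset.univ.erase i₀, r ^ d i * Real.log r ^ ℓ i‖ := h1
      _ ≤ m / (2 * M) * ‖r ^ D * Real.log r ^ L‖ := hsmall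
      _ = m / (2 * M) * X := by rw [h2]
  -- split the sum
  set g : Fin n → ℂ := fun i => ((r ^ d i * Real.log r ^ ℓ i : ℝ) : ℂ) * f i θ with hg
  have hsplit : (∑ i, g i) = g i₀ + ∑ i ∈ Finset.univ.erase i₀, g i :=
    (Finset.add_sum_erase Finset.univ g (Finset.mem_univ i₀)).symm
  -- lower bound on main term
  have hmain : X * m < ‖g i₀‖ := by
    have : ‖g i₀‖
        = (r ^ d i₀ * Real.log r ^ ℓ i₀) * ‖f i₀ θ‖ := by
      rw [hg, norm_mul, Complex.norm_real, Real.norm_eq_abs, abs_of_nonneg (hcoeff i₀)]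
    rw [this, hdi₀, hli₀]
    exact (mul_lt_mul_iff_right₀ hX0).mpr (hflow θ hθ)
  -- upper bound on the rest
  have hrest : ‖∑ i ∈ Finset.univ.erase i₀, g i‖ ≤ m / 2 * X := by
    have h1 : ‖∑ i ∈ Finset.univ.erase i₀, g i‖
        ≤ ∑ i ∈ Finset.univ.erase i₀, (r ^ d i * Real.log r ^ ℓ i) * M := by
      refine le_trans (norm_sum_le _ _) (Finset.sum_le_sum ?_)
      intro i _
      rw [hg, norm_mul, Complex.norm_real, Real.norm_eq_abs, abs_of_nonneg (hcoeff i)]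
      exact mul_le_mul_of_nonneg_left (hfM i θ (hsub hθ)) (hcoeff i)
    have h2 : (∑ i ∈ Finset.univ.erase i₀, (r ^ d i * Real.log r ^ ℓ i) * M)
        = (∑ i ∈ Finset.univ.erase i₀, r ^ d i * Real.log r ^ ℓ i) * M := by
      rw [Finset.sum_mul]
    have h3 : (∑ i ∈ Finset.univ.erase i₀, r ^ d i * Real.log r ^ ℓ i) * M
        ≤ (m / (2 * M) * X) * M :=
      mul_le_mul_of_nonneg_right hsum_le hM0.le
    have h4 : (m / (2 * M) * X) * M = m / 2 * X := by
      field_simp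
    linarith
  -- conclude
  have h5 : ‖g i₀‖ - ‖∑ i ∈ Finset.univ.erase i₀, g i‖
      ≤ ‖∑ i, g i‖ := by
    have h := norm_sub_norm_le (g i₀) (-(∑ i ∈ Finset.univ.erase i₀, g i))
    simp only [norm_neg, sub_neg_eq_add] at h
    rw [hsplit]
    simpa using h
  have hstep : m / 2 * r ^ D ≤ m / 2 * X :=
    mul_le_mul_of_nonneg_left hXge (by positivity)
  linarith
end

section
/- Let a < b be reals, n ≥ 1, and let (d_i, ℓ_i), i = 1,…,n, be n distinct pairs in ℝ × ℕ. Let f_1, …, f_n be nonzero continuous functions [a,b] → ℂ, and define φ(r, θ) = Σ_{i=1}^n r^{d_i} (ln r)^{ℓ_i} f_i(θ). Then there exist a nontrivial closed subinterval I ⊆ [a,b], a constant c > 0, and r₁ > 0 such that for all 0 < r < r₁ and all θ ∈ I, |φ(r,θ)| > c · r^{min_j d_j}. -/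
open Set Filter Real Topology

lemma aux_rpow_abs_log (e : ℝ) (he : 0 < e) (k : ℕ) :
    Tendsto (fun r : ℝ => r ^ e * |Real.log r| ^ k) (𝓝[>] 0) (𝓝 0) := by
  rcases Nat.eq_zero_or_pos k with hk | hk
  · subst hk
    simp only [pow_zero, mul_one]
    have h0 : ContinuousAt (fun x : ℝ => x ^ e) 0 :=
      Real.continuousAt_rpow_const 0 e (Or.inr he.le)
    have := h0.tendsto
    rw [Real.zero_rpow he.ne'] at this
    exact this.mono_left nhdsWithin_le_nhds
  · have hk0 : (k : ℝ) ≠ 0 := Nat.cast_ne_zero.mpr hk.ne'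
    have h1 : Tendsto (fun r : ℝ => Real.log r * r ^ (e / k)) (𝓝[>] 0) (𝓝 0) :=
      tendsto_log_mul_rpow_nhdsGT_zero (by positivity)
    have h2 : Tendsto (fun r : ℝ => |Real.log r * r ^ (e / k)| ^ k) (𝓝[>] 0) (𝓝 0) := by
      have := (h1.abs).pow k
      simpa [zero_pow hk.ne'] using this
    refine h2.congr' ?_
    filter_upwards [self_mem_nhdsWithin] with r (hr : 0 < r)
    have hrp : 0 ≤ r ^ (e / k) := (Real.rpow_pos_of_pos hr _).le
    rw [abs_mul, abs_of_nonneg hrp, mul_pow, ← Real.rpow_natCast (r ^ (e / k)) k,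
      ← Real.rpow_mul hr.le, div_mul_cancel₀ e hk0]
    ring

lemma aux_interval (a b : ℝ) (hab : a < b) (g : ℝ → ℂ) (hg : ContinuousOn g (Icc a b))
    (θ₀ : ℝ) (hθ₀ : θ₀ ∈ Icc a b) (hne : g θ₀ ≠ 0) :
    ∃ a' b', a ≤ a' ∧ a' < b' ∧ b' ≤ b ∧
      ∀ θ ∈ Icc a' b', ‖g θ₀‖ / 2 ≤ ‖g θ‖ := by
  have hg0 : 0 < ‖g θ₀‖ := norm_pos_iff.mpr hne
  have hm : 0 < ‖g θ₀‖ / 2 := by positivity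
  have hcont : ContinuousWithinAt (fun θ => ‖g θ‖) (Icc a b) θ₀ := (hg θ₀ hθ₀).norm
  have hev : ∀ᶠ θ in 𝓝[Icc a b] θ₀, ‖g θ₀‖ / 2 < ‖g θ‖ :=
    hcont.eventually (eventually_gt_nhds (by linarith))
  obtain ⟨δ, hδ, hball⟩ := Metric.mem_nhdsWithin_iff.mp hev
  obtain ⟨ha, hb⟩ := hθ₀
  refine ⟨max a (θ₀ - δ/2), min b (θ₀ + δ/2), le_max_left _ _, ?_, min_le_left _ _, ?_⟩
  · rw [lt_min_iff, max_lt_iff, max_lt_iff]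
    constructor <;> constructor <;> linarith
  · intro θ hθ
    have h1 : max a (θ₀ - δ/2) ≤ θ := hθ.1
    have h2 : θ ≤ min b (θ₀ + δ/2) := hθ.2
    have h3 : a ≤ θ := le_trans (le_max_left _ _) h1
    have h4 : θ ≤ b := le_trans h2 (min_le_left _ _)
    have h5 : θ₀ - δ/2 ≤ θ := le_trans (le_max_right _ _) h1
    have h6 : θ ≤ θ₀ + δ/2 := le_trans h2 (min_le_right _ _)
    have hd : dist θ θ₀ < δ := by
      rw [Real.dist_eq, abs_lt]; constructor <;> linarith
    exact (hball ⟨hd, h3, h4⟩).le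

/-- Lemma 3.2 (behavior at the origin): for
`φ(r,θ) = Σᵢ r^{dᵢ} (ln r)^{ℓᵢ} fᵢ(θ)` with distinct pairs `(dᵢ,ℓᵢ)` and
nonzero continuous `fᵢ` on `[a,b]`, there are a nontrivial closed subinterval
`I ⊆ [a,b]`, `c > 0` and `r₁ > 0` such that `|φ(r,θ)| > c · r^{min dⱼ}` for all
`0 < r < r₁`, `θ ∈ I`. -/
theorem stmt5 (a b : ℝ) (hab : a < b) (n : ℕ) (hn : 0 < n)
    (d : Fin n → ℝ) (ℓ : Fin n → ℕ)
    (hdist : Function.Injective (fun i => (d i, ℓ i)))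
    (f : Fin n → ℝ → ℂ)
    (hfc : ∀ i, ContinuousOn (f i) (Set.Icc a b))
    (hfne : ∀ i, ∃ θ ∈ Set.Icc a b, f i θ ≠ 0) :
    ∃ a' b' : ℝ, a ≤ a' ∧ a' < b' ∧ b' ≤ b ∧ ∃ c : ℝ, 0 < c ∧ ∃ r₁ : ℝ, 0 < r₁ ∧
      ∀ r : ℝ, 0 < r → r < r₁ → ∀ θ ∈ Set.Icc a' b',
        c * r ^ (Finset.univ.inf'
            (Finset.univ_nonempty_iff.mpr (Fin.pos_iff_nonempty.mp hn)) d)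
          < ‖∑ i, ((r ^ d i * Real.log r ^ ℓ i : ℝ) : ℂ) * f i θ‖ := by
  set D := Finset.univ.inf'
      (Finset.univ_nonempty_iff.mpr (Fin.pos_iff_nonempty.mp hn)) d with hDdef
  have hDle : ∀ i, D ≤ d i := fun i => Finset.inf'_le d (Finset.mem_univ i)
  obtain ⟨j₀, -, hj₀⟩ := Finset.exists_mem_eq_inf'
      (Finset.univ_nonempty_iff.mpr (Fin.pos_iff_nonempty.mp hn)) d
  set S : Finset (Fin n) := Finset.univ.filter (fun i => d i = D) with hSdef
  have hSne : S.Nonempty := ⟨j₀, Finset.mem_filter.mpr ⟨Finset.mem_univ _, hj₀.symm⟩⟩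
  set L : ℕ := S.sup' hSne ℓ with hLdef
  obtain ⟨i₀, hi₀S, hLeq⟩ := Finset.exists_mem_eq_sup' hSne ℓ
  have hdi₀ : d i₀ = D := (Finset.mem_filter.mp hi₀S).2
  have hℓi₀ : ℓ i₀ = L := hLeq.symm
  have hkey : ∀ i, i ≠ i₀ → D < d i ∨ (d i = D ∧ ℓ i < L) := by
    intro i hi
    rcases (hDle i).lt_or_eq with h | h
    · exact Or.inl h
    · refine Or.inr ⟨h.symm, ?_⟩
      have hle : ℓ i ≤ L := Finset.le_sup'
        ℓ (Finset.mem_filter.mpr ⟨Finset.mem_univ _, h.symm⟩)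
      refine hle.lt_of_ne fun hℓ => hi ?_
      exact hdist (show (d i, ℓ i) = (d i₀, ℓ i₀) by
        rw [← h, hdi₀, hℓ, hℓi₀])
  -- bounds on |f i|
  have hCex : ∀ i, ∃ C : ℝ, ∀ θ ∈ Icc a b, ‖f i θ‖ ≤ C := fun i =>
    isCompact_Icc.exists_bound_of_continuousOn (hfc i)
  choose C hC using hCex
  -- interval where f i₀ is bounded below
  obtain ⟨θ₀, hθ₀, hθ₀ne⟩ := hfne i₀
  obtain ⟨a', b', ha', hab', hb', hlow⟩ :=
    aux_interval a b hab (f i₀) (hfc i₀) θ₀ hθ₀ hθ₀ne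
  set m : ℝ := ‖f i₀ θ₀‖ / 2 with hmdef
  have hm0 : 0 < m := by
    have : 0 < ‖f i₀ θ₀‖ := norm_pos_iff.mpr hθ₀ne
    positivity
  -- the error function
  set G : ℝ → ℝ := fun r =>
    ∑ i ∈ Finset.univ.erase i₀,
      (r ^ (d i - D) * |Real.log r| ^ ℓ i / |Real.log r| ^ L) * C i with hGdef
  have hG : Tendsto G (𝓝[>] 0) (𝓝 0) := by
    rw [hGdef]
    have h0 : (0:ℝ) = ∑ i ∈ Finset.univ.erase i₀, (0:ℝ) := by simp
    rw [h0]
    refine tendsto_finset_sum _ fun i hi => ?_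
    have hi' : i ≠ i₀ := Finset.ne_of_mem_erase hi
    have hterm : Tendsto
        (fun r : ℝ => r ^ (d i - D) * |Real.log r| ^ ℓ i / |Real.log r| ^ L)
        (𝓝[>] 0) (𝓝 0) := by
      rcases hkey i hi' with h | ⟨h, hℓ⟩
      · -- d i > D : squeeze
        have hbnd := aux_rpow_abs_log (d i - D) (by linarith) (ℓ i)
        refine squeeze_zero' ?_ ?_ hbnd
        · filter_upwards [Ioo_mem_nhdsGT_of_mem
            (Set.left_mem_Ico.mpr (Real.exp_pos (-1)))] with r hr
          have hr0 : 0 < r := hr.1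
          positivity
        · filter_upwards [Ioo_mem_nhdsGT_of_mem
            (Set.left_mem_Ico.mpr (Real.exp_pos (-1)))] with r hr
          have hr0 : 0 < r := hr.1
          have hlog : 1 ≤ |Real.log r| := by
            have := Real.log_lt_log hr0 hr.2
            rw [Real.log_exp] at this
            exact le_abs.mpr (Or.inr (by linarith))
          refine div_le_self (by positivity) (one_le_pow₀ hlog)
      · -- d i = D, ℓ i < L
        have h1 : Tendsto (fun r : ℝ => |Real.log r|) (𝓝[>] 0) atTop :=
          tendsto_abs_atBot_atTop.comp Real.tendsto_log_nhdsGT_zero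
        have h2 := (tendsto_pow_div_pow_atTop_zero hℓ).comp h1
        refine h2.congr fun r => ?_
        simp [Function.comp, h, sub_self, Real.rpow_zero]
    simpa using hterm.mul_const (C i)
  have hev : ∀ᶠ r in 𝓝[>] (0:ℝ), G r < m / 2 ∧ r < Real.exp (-1) := by
    refine (hG.eventually (eventually_lt_nhds (by positivity))).and ?_
    exact eventually_nhdsWithin_of_eventually_nhds
      (eventually_lt_nhds (Real.exp_pos (-1)))
  obtain ⟨r₁, hr₁, hsub⟩ := mem_nhdsGT_iff_exists_Ioo_subset.mp hev
  refine ⟨a', b', ha', hab', hb', m/4, by positivity, r₁, hr₁, ?_⟩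
  intro r hr0 hrr₁ θ hθ
  obtain ⟨hGr, hre⟩ : G r < m / 2 ∧ r < Real.exp (-1) := hsub ⟨hr0, hrr₁⟩
  have hlog1 : 1 ≤ |Real.log r| := by
    have := Real.log_lt_log hr0 hre
    rw [Real.log_exp] at this
    exact le_abs.mpr (Or.inr (by linarith))
  have hlogpos : 0 < |Real.log r| := by linarith
  have hrD : 0 < r ^ D := Real.rpow_pos_of_pos hr0 D
  set t : Fin n → ℂ := fun i => ((r ^ d i * Real.log r ^ ℓ i : ℝ) : ℂ) * f i θ with htdef
  have hnorm : ∀ i, ‖t i‖ = r ^ d i * |Real.log r| ^ ℓ i * ‖f i θ‖ := by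
    intro i
    rw [htdef]
    simp only [norm_mul, Complex.norm_real, Real.norm_eq_abs, abs_mul]
    rw [abs_of_pos (Real.rpow_pos_of_pos hr0 _), abs_pow]
  have hθab : θ ∈ Icc a b :=
    ⟨le_trans ha' hθ.1, le_trans hθ.2 hb'⟩
  -- lower bound on main term
  have hmain : r ^ D * |Real.log r| ^ L * m ≤ ‖t i₀‖ := by
    rw [hnorm i₀, hdi₀, hℓi₀]
    have := hlow θ hθ
    have hP : 0 < r ^ D * |Real.log r| ^ L := by positivity
    calc r ^ D * |Real.log r| ^ L * m ≤ r ^ D * |Real.log r| ^ L * ‖f i₀ θ‖ := by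
          exact mul_le_mul_of_nonneg_left (this) hP.le
      _ = _ := rfl
  -- upper bound on error terms
  have herr : ‖∑ i ∈ Finset.univ.erase i₀, t i‖ ≤ r ^ D * |Real.log r| ^ L * G r := by
    calc ‖∑ i ∈ Finset.univ.erase i₀, t i‖
        ≤ ∑ i ∈ Finset.univ.erase i₀, ‖t i‖ := norm_sum_le _ _
      _ ≤ ∑ i ∈ Finset.univ.erase i₀,
            r ^ D * |Real.log r| ^ L *
              ((r ^ (d i - D) * |Real.log r| ^ ℓ i / |Real.log r| ^ L) * C i) := by
          refine Finset.sum_le_sum fun i _ => ?_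
          rw [hnorm i]
          have hrd : r ^ d i = r ^ D * r ^ (d i - D) := by
            rw [← Real.rpow_add hr0]; ring_nf
          have hCi : ‖f i θ‖ ≤ C i := hC i θ hθab
          have hLne : (|Real.log r| ^ L : ℝ) ≠ 0 := by positivity
          rw [hrd]
          rw [show r ^ D * r ^ (d i - D) * |Real.log r| ^ ℓ i * ‖f i θ‖
              = r ^ D * |Real.log r| ^ L *
                ((r ^ (d i - D) * |Real.log r| ^ ℓ i / |Real.log r| ^ L) * ‖f i θ‖) by
            field_simp]
          have hfac : 0 ≤ r ^ D * |Real.log r| ^ L := by positivity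
          refine mul_le_mul_of_nonneg_left ?_ hfac
          have hpos : 0 ≤ r ^ (d i - D) * |Real.log r| ^ ℓ i / |Real.log r| ^ L := by
            have := Real.rpow_pos_of_pos hr0 (d i - D)
            positivity
          exact mul_le_mul_of_nonneg_left hCi hpos
      _ = r ^ D * |Real.log r| ^ L * G r := by
          rw [hGdef, Finset.mul_sum]
  -- assemble
  have hsplit : ∑ i, t i = t i₀ + ∑ i ∈ Finset.univ.erase i₀, t i :=
    (Finset.add_sum_erase _ _ (Finset.mem_univ i₀)).symm
  have h1 : ‖t i₀‖ - ‖∑ i ∈ Finset.univ.erase i₀, t i‖ ≤ ‖∑ i, t i‖ := by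
    rw [hsplit]
    have h := norm_sub_norm_le (t i₀) (-(∑ i ∈ Finset.univ.erase i₀, t i))
    rw [norm_neg, sub_neg_eq_add] at h
    exact h
  have hLpow : 1 ≤ |Real.log r| ^ L := one_le_pow₀ hlog1
  have hgoal : m/4 * r ^ D < ‖∑ i, t i‖ := by
    nlinarith [mul_lt_mul_of_pos_left hGr (mul_pos hrD (lt_of_lt_of_le one_pos hLpow)),
      mul_le_mul_of_nonneg_left hLpow (le_of_lt (mul_pos hrD (half_pos hm0)))]
  exact hgoal
end

section
/- Let f : ℝ₊* → ℂ be a C² function satisfying the Euler equation (r f'(r))' · r = d² f(r), i.e. r² f''(r) + r f'(r) = d² f(r), for some d > 0. Then there exist a, b ∈ ℂ such that f(r) = a r^d + b r^{-d} for all r > 0. -/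
open Set

lemma const_of_hasDerivAt_zero_Ioi (V : ℝ → ℂ)
    (h : ∀ x ∈ Ioi (0:ℝ), HasDerivAt V 0 x) {x y : ℝ}
    (hx : x ∈ Ioi (0:ℝ)) (hy : y ∈ Ioi (0:ℝ)) : V x = V y := by
  refine (convex_Ioi (0:ℝ)).is_const_of_fderivWithin_eq_zero
    (fun z hz => (h z hz).differentiableAt.differentiableWithinAt) (fun z hz => ?_) hx hy
  rw [fderivWithin_eq_fderiv (isOpen_Ioi.uniqueDiffOn z hz) (h z hz).differentiableAt,
    (h z hz).hasFDerivAt.fderiv]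
  ext
  simp

/-- Euler's equation: a `C²` function `f` on `(0,∞)` satisfying
`r² f''(r) + r f'(r) = d² f(r)` with `d > 0` is of the form
`f(r) = a r^d + b r^{-d}`. -/
theorem stmt8 (d : ℝ) (hd : 0 < d) (f : ℝ → ℂ)
    (hf : ContDiffOn ℝ 2 f (Set.Ioi 0))
    (hode : ∀ r : ℝ, 0 < r →
      (r : ℂ) ^ 2 * deriv (deriv f) r + (r : ℂ) * deriv f r = ((d : ℝ) : ℂ) ^ 2 * f r) :
    ∃ a b : ℂ, ∀ r : ℝ, 0 < r →
      f r = a * ((r ^ d : ℝ) : ℂ) + b * ((r ^ (-d) : ℝ) : ℂ) := by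
  have hdC : ((d : ℂ)) ≠ 0 := by exact_mod_cast hd.ne'
  -- differentiability facts
  have hf1 : ∀ r ∈ Ioi (0:ℝ), HasDerivAt f (deriv f r) r := fun r hr =>
    ((hf.differentiableOn two_ne_zero).differentiableAt (isOpen_Ioi.mem_nhds hr)).hasDerivAt
  have hf' : ContDiffOn ℝ 1 (deriv f) (Ioi 0) := hf.deriv_of_isOpen isOpen_Ioi (by norm_num)
  have hf2 : ∀ r ∈ Ioi (0:ℝ), HasDerivAt (deriv f) (deriv (deriv f) r) r := fun r hr =>
    ((hf'.differentiableOn one_ne_zero).differentiableAt (isOpen_Ioi.mem_nhds hr)).hasDerivAt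
  -- rpow derivative, cast to ℂ
  have hrp : ∀ (p : ℝ), ∀ r ∈ Ioi (0:ℝ),
      HasDerivAt (fun x : ℝ => ((x ^ p : ℝ) : ℂ)) (((p * r ^ (p - 1) : ℝ) : ℂ)) r := by
    intro p r hr
    exact (Real.hasDerivAt_rpow_const (Or.inl (ne_of_gt hr))).ofReal_comp
  have hid : ∀ r : ℝ, HasDerivAt (fun x : ℝ => (x : ℂ)) 1 r := fun r => by
    simpa using (hasDerivAt_id r).ofReal_comp
  set g : ℝ → ℂ := fun x => (x : ℂ) * deriv f x + (d : ℂ) * f x with hg_def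
  have hg : ∀ r ∈ Ioi (0:ℝ),
      HasDerivAt g (deriv f r + (r : ℂ) * deriv (deriv f) r + (d : ℂ) * deriv f r) r := by
    intro r hr
    have h := ((hid r).mul (hf2 r hr)).add ((hf1 r hr).const_mul ((d:ℝ):ℂ))
    exact h.congr_deriv (by ring)
  -- first reduction: V r = g r * r^{-d} has zero derivative
  set V : ℝ → ℂ := fun x => g x * ((x ^ (-d) : ℝ) : ℂ) with hV_def
  have hV : ∀ r ∈ Ioi (0:ℝ), HasDerivAt V 0 r := by
    intro r hr
    have hr0 : (0:ℝ) < r := hr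
    have h1 := (hg r hr).mul (hrp (-d) r hr)
    have hA : (r ^ (-d) : ℝ) = r ^ (-d - 1) * r := by
      rw [← Real.rpow_add_one hr0.ne']; ring_nf
    refine h1.congr_deriv ?_
    symm
    have key := hode r hr0
    push_cast [hA]
    simp only [hg_def]
    set C : ℂ := ((r ^ (-d - 1) : ℝ) : ℂ)
    linear_combination (-C) * key
  obtain ⟨c, hc⟩ : ∃ c : ℂ, ∀ r ∈ Ioi (0:ℝ), g r = c * ((r ^ d : ℝ) : ℂ) := by
    refine ⟨g 1, fun r hr => ?_⟩
    have h1 : (1:ℝ) ∈ Ioi (0:ℝ) := by norm_num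
    have := const_of_hasDerivAt_zero_Ioi V hV hr h1
    have hr0 : (0:ℝ) < r := hr
    have hcancel : ((r ^ (-d) : ℝ) : ℂ) * ((r ^ d : ℝ) : ℂ) = 1 := by
      rw [← Complex.ofReal_mul, ← Real.rpow_add hr0]
      norm_num
    have hV1 : V 1 = g 1 := by simp [hV_def, Real.one_rpow]
    have : g r * ((r ^ (-d) : ℝ) : ℂ) = g 1 := by rw [← hV1]; exact this
    calc g r = g r * (((r ^ (-d) : ℝ) : ℂ) * ((r ^ d : ℝ) : ℂ)) := by rw [hcancel, mul_one]
    _ = g 1 * ((r ^ d : ℝ) : ℂ) := by rw [← mul_assoc, this]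
  -- second reduction: W r = f r * r^d - (c/(2d)) * r^(2d) has zero derivative
  set W : ℝ → ℂ := fun x => f x * ((x ^ d : ℝ) : ℂ) - (c / (2 * d)) * ((x ^ (2*d) : ℝ) : ℂ)
    with hW_def
  have hW : ∀ r ∈ Ioi (0:ℝ), HasDerivAt W 0 r := by
    intro r hr
    have hr0 : (0:ℝ) < r := hr
    have h1 := ((hf1 r hr).mul (hrp d r hr)).sub
      ((hasDerivAt_const r (c / (2 * (d:ℂ)))).mul (hrp (2*d) r hr))
    have h1' : HasDerivAt W (deriv f r * ((r ^ d : ℝ) : ℂ) + f r * ((d * r ^ (d - 1) : ℝ) : ℂ)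
        - c / (2 * (d:ℂ)) * ((2 * d * r ^ (2 * d - 1) : ℝ) : ℂ)) r := by
      exact h1.congr_deriv (by simp)
    convert h1' using 1
    have e2b : (r ^ (2 * d - 1) : ℝ) = r ^ (d - 1) * r ^ d := by
      rw [← Real.rpow_add hr0]; ring_nf
    have eB : (r ^ d : ℝ) = r ^ (d - 1) * r := by
      rw [← Real.rpow_add_one hr0.ne']; ring_nf
    have hgr' : (r : ℂ) * deriv f r + (d : ℂ) * f r = c * ((r ^ d : ℝ) : ℂ) := hc r hr
    have hcd : c / (2 * (d : ℂ)) * (2 * (d : ℂ)) = c :=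
      div_mul_cancel₀ c (by simpa using hdC)
    push_cast [e2b, eB] at hgr' ⊢
    set C : ℂ := ((r ^ (d - 1) : ℝ) : ℂ)
    linear_combination (-C) * hgr' + (C * C * (r : ℂ)) * hcd
  -- conclude
  refine ⟨c / (2 * d), f 1 - c / (2 * d), fun r hr => ?_⟩
  have hr0 : (0:ℝ) < r := hr
  have h1 : (1:ℝ) ∈ Ioi (0:ℝ) := by norm_num
  have hWc := const_of_hasDerivAt_zero_Ioi W hW hr h1
  have hW1 : W 1 = f 1 - c / (2 * d) := by simp [hW_def, Real.one_rpow]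
  have hcancel : ((r ^ d : ℝ) : ℂ) * ((r ^ (-d) : ℝ) : ℂ) = 1 := by
    rw [← Complex.ofReal_mul, ← Real.rpow_add hr0]; norm_num
  have h2d : ((r ^ (2*d) : ℝ) : ℂ) * ((r ^ (-d) : ℝ) : ℂ) = ((r ^ d : ℝ) : ℂ) := by
    rw [← Complex.ofReal_mul, ← Real.rpow_add hr0, show 2*d + -d = d by ring]
  have hWr : f r * ((r ^ d : ℝ) : ℂ) - (c / (2 * d)) * ((r ^ (2*d) : ℝ) : ℂ)
      = f 1 - c / (2 * d) := by rw [← hW1]; exact hWc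
  calc f r = (f r * ((r ^ d : ℝ) : ℂ)) * ((r ^ (-d) : ℝ) : ℂ) := by
        rw [mul_assoc, hcancel, mul_one]
    _ = ((f 1 - c / (2 * d)) + (c / (2 * d)) * ((r ^ (2*d) : ℝ) : ℂ))
          * ((r ^ (-d) : ℝ) : ℂ) := by rw [← hWr]; ring_nf
    _ = c / (2 * d) * ((r ^ d : ℝ) : ℂ) + (f 1 - c / (2 * d)) * ((r ^ (-d) : ℝ) : ℂ) := by
        rw [add_mul, mul_assoc, h2d]; ring
end

section
/- There is a unique sequence of real polynomials (𝒰_n)_{n ∈ ℕ} in the variable Y satisfying: 𝒰₀'' = 0, 𝒰₀'(0) = μ₀/μ₁, 𝒰₀(-1) = 0, and for n ≥ 1: 𝒰_n'' = -𝒰_{n-1}, 𝒰_n'(0) = 0, 𝒰_n(-1) = 0. Moreover, for all Y ∈ (-1,0) and t ∈ (-π/2, π/2), the series Σ_{n≥0} 𝒰_n(Y) t^{2n+1} converges and equals (μ₀/μ₁) · sin(t(Y+1))/cos(t). In particular 𝒰_n(0) = (μ₀/μ₁) T_n, where (T_n) are the Maclaurin coefficients of tan: tan t = Σ_{n≥0}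 T_n t^{2n+1} on (-π/2, π/2). -/
open Polynomial

/-- The defining recursion of the layer profiles `(𝒰ₙ)`:
`𝒰₀'' = 0`, `𝒰₀'(0) = μ₀/μ₁`, `𝒰₀(-1) = 0`, and for `n ≥ 1`:
`𝒰ₙ'' = -𝒰ₙ₋₁`, `𝒰ₙ'(0) = 0`, `𝒰ₙ(-1) = 0`. -/
def LayerCond (μ₀ μ₁ : ℝ) (U : ℕ → Polynomial ℝ) : Prop :=
  Polynomial.derivative (Polynomial.derivative (U 0)) = 0 ∧
  (Polynomial.derivative (U 0)).eval 0 = μ₀ / μ₁ ∧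
  (U 0).eval (-1) = 0 ∧
  ∀ n : ℕ,
    Polynomial.derivative (Polynomial.derivative (U (n + 1))) = -(U n) ∧
    (Polynomial.derivative (U (n + 1))).eval 0 = 0 ∧
    (U (n + 1)).eval (-1) = 0

open scoped Nat NNReal

set_option maxHeartbeats 1000000

namespace Stmt11Aux

/-- A summable family is bounded. -/
lemma aux_bdd {a : ℕ → ℝ} {S : ℝ} (h : HasSum a S) : ∃ C : ℝ, 0 ≤ C ∧ ∀ m, |a m| ≤ C := by
  have h0 : Filter.Tendsto a Filter.atTop (nhds 0) := h.summable.tendsto_atTop_zero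
  have habs : Filter.Tendsto (fun m => |a m|) Filter.atTop (nhds 0) := by
    simpa using h0.abs
  obtain ⟨C, hC⟩ := habs.bddAbove_range
  exact ⟨C, le_trans (abs_nonneg (a 0)) (hC ⟨0, rfl⟩), fun m => hC ⟨m, rfl⟩⟩

/-- Inner-point absolute summability for odd power series converging on `(-r,r)`. -/
lemma aux_summable_abs {r : ℝ} {a : ℕ → ℝ} {g : ℝ → ℝ}
    (ha : ∀ t ∈ Set.Ioo (-r) r, HasSum (fun m => a m * t ^ (2 * m + 1)) (g t))
    {t : ℝ} (ht : t ∈ Set.Ioo (-r) r) :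
    Summable fun m => |a m * t ^ (2 * m + 1)| := by
  have htr : |t| < r := abs_lt.mpr ⟨ht.1, ht.2⟩
  set u : ℝ := (|t| + r) / 2 with hu
  have hu1 : |t| < u := by simp only [hu]; linarith
  have hu2 : u < r := by simp only [hu]; linarith
  have hu0 : 0 < u := by
    have := abs_nonneg t; simp only [hu]; linarith [abs_nonneg t]
  have hmem : u ∈ Set.Ioo (-r) r := ⟨by linarith, hu2⟩
  obtain ⟨C, hC0, hC⟩ := aux_bdd (ha u hmem)
  set q : ℝ := |t| / u with hq
  have hq0 : 0 ≤ q := by positivity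
  have hq1 : q < 1 := (div_lt_one hu0).mpr hu1
  have hgeom : Summable fun m : ℕ => C * q * (q ^ 2) ^ m :=
    (summable_geometric_of_lt_one (by positivity) (by nlinarith)).mul_left (C * q)
  have hgeom2 : Summable fun m : ℕ => C * q ^ (2 * m + 1) :=
    hgeom.congr fun m => by rw [← pow_mul]; ring
  refine Summable.of_nonneg_of_le (fun m => abs_nonneg _) (fun m => ?_) hgeom2
  have hpow : |t| ^ (2 * m + 1) = u ^ (2 * m + 1) * q ^ (2 * m + 1) := by
    rw [← mul_pow]; congr 1
    rw [hq, mul_div_assoc', mul_comm, mul_div_assoc, div_self hu0.ne', mul_one]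
  have h1 : |a m * t ^ (2 * m + 1)| = |a m * u ^ (2 * m + 1)| * q ^ (2 * m + 1) := by
    rw [abs_mul, abs_mul, abs_pow, abs_pow, abs_of_pos hu0, hpow]
    ring
  rw [h1]
  exact mul_le_mul_of_nonneg_right (hC m) (by positivity)

/-- spread the odd coefficients into all of `ℕ` -/
noncomputable def spread (a : ℕ → ℝ) : ℕ → ℝ := fun k => if k % 2 = 1 then a (k / 2) else 0

lemma spread_odd (a : ℕ → ℝ) (m : ℕ) : spread a (2 * m + 1) = a m := by
  have h1 : (2 * m + 1) % 2 = 1 := by omega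
  have h2 : (2 * m + 1) / 2 = m := by omega
  simp [spread, h1, h2]

lemma aux_fps {r : ℝ} (hr : 0 < r) {a : ℕ → ℝ} {g : ℝ → ℝ}
    (ha : ∀ t ∈ Set.Ioo (-r) r, HasSum (fun n => a n * t ^ (2 * n + 1)) (g t)) :
    HasFPowerSeriesAt g (FormalMultilinearSeries.ofScalars ℝ (spread a)) 0 := by
  have hmem : (3 * r / 4) ∈ Set.Ioo (-r) r := ⟨by linarith, by linarith⟩
  obtain ⟨C, hC0, hC⟩ := aux_bdd (ha _ hmem)
  refine ⟨ENNReal.ofReal (r / 2), ?_, ENNReal.ofReal_pos.mpr (by linarith), ?_⟩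
  · rw [ENNReal.ofReal]
    apply FormalMultilinearSeries.le_radius_of_bound _ C
    intro n
    have hn : ‖FormalMultilinearSeries.ofScalars ℝ (spread a) n‖ = |spread a n| := by
      rw [FormalMultilinearSeries.ofScalars_norm, Real.norm_eq_abs]
    rw [hn]
    have hcoe : ((Real.toNNReal (r / 2) : ℝ≥0) : ℝ) = r / 2 :=
      Real.coe_toNNReal _ (by linarith)
    rw [hcoe]
    rcases Nat.even_or_odd n with he | ho
    · have : n % 2 = 0 := Nat.even_iff.mp he
      simp [spread, this, hC0]
    · obtain ⟨m, hm⟩ := ho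
      subst hm
      rw [spread_odd]
      have h34 : (0:ℝ) ≤ 3 * r / 4 := by linarith
      calc |a m| * (r / 2) ^ (2 * m + 1)
          ≤ |a m| * (3 * r / 4) ^ (2 * m + 1) := by
            apply mul_le_mul_of_nonneg_left _ (abs_nonneg _)
            exact pow_le_pow_left₀ (by linarith) (by linarith) _
        _ = |a m * (3 * r / 4) ^ (2 * m + 1)| := by
            rw [abs_mul, abs_pow, abs_of_nonneg h34]
        _ ≤ C := hC m
  · intro y hy
    have hy' : |y| < r / 2 := by
      rw [EMetric.mem_ball, edist_dist, Real.dist_eq, sub_zero,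
        ENNReal.ofReal_lt_ofReal_iff (by linarith)] at hy
      exact hy
    have hmem' : y ∈ Set.Ioo (-r) r := by
      constructor <;> [nlinarith [abs_nonneg y, neg_abs_le y]; nlinarith [le_abs_self y]]
    have base : HasSum (fun m => a m * y ^ (2 * m + 1)) (g y) := ha y hmem'
    have hinj : Function.Injective (fun m : ℕ => 2 * m + 1) := by
      intro x y h
      dsimp only at h
      omega
    have hzero : ∀ k ∉ Set.range (fun m : ℕ => 2 * m + 1),
        spread a k * y ^ k = 0 := by
      intro k hk
      have : k % 2 = 0 := by
        rcases Nat.even_or_odd k with he | ho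
        · exact Nat.even_iff.mp he
        · obtain ⟨m, hm⟩ := ho
          exact absurd ⟨m, show 2 * m + 1 = k by omega⟩ hk
      simp [spread, this]
    have : HasSum (fun k => spread a k * y ^ k) (g y) := by
      refine (hinj.hasSum_iff hzero).mp (base.congr_fun fun m => ?_)
      simp only [Function.comp_apply, spread_odd]
    simp only [zero_add]
    refine this.congr_fun fun k => ?_
    rw [FormalMultilinearSeries.ofScalars_apply_eq, smul_eq_mul]

/-- unique coefficients for odd power series -/
lemma odd_unique {r : ℝ} (hr : 0 < r) {a b : ℕ → ℝ} {g : ℝ → ℝ}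
    (ha : ∀ t ∈ Set.Ioo (-r) r, HasSum (fun n => a n * t ^ (2 * n + 1)) (g t))
    (hb : ∀ t ∈ Set.Ioo (-r) r, HasSum (fun n => b n * t ^ (2 * n + 1)) (g t)) :
    a = b := by
  have h := (aux_fps hr ha).eq_formalMultilinearSeries (aux_fps hr hb)
  have h2 : spread a = spread b := FormalMultilinearSeries.ofScalars_series_injective ℝ ℝ h
  funext m
  have := congrFun h2 (2 * m + 1)
  rwa [spread_odd, spread_odd] at this

end Stmt11Aux

namespace Stmt11Aux

lemma cos_norm_summable (t : ℝ) :
    Summable fun k : ℕ => ‖(-1 : ℝ) ^ k * t ^ (2 * k) / (2 * k)!‖ := by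
  have h := Real.summable_pow_div_factorial |t|
  have hinj : Function.Injective (fun k : ℕ => 2 * k) := by
    intro a b hab; dsimp only at hab; omega
  have h2 : Summable fun k : ℕ => |t| ^ (2 * k) / ((2 * k)! : ℝ) := h.comp_injective hinj
  refine h2.congr fun k => ?_
  rw [Real.norm_eq_abs, abs_div, abs_mul, abs_pow, abs_pow, abs_neg, abs_one, one_pow,
    one_mul, Nat.abs_cast]

lemma tan_coeff {T : ℕ → ℝ}
    (hT : ∀ t ∈ Set.Ioo (-(Real.pi / 2)) (Real.pi / 2),
      HasSum (fun n : ℕ => T n * t ^ (2 * n + 1)) (Real.tan t)) (n : ℕ) :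
    ∑ k ∈ Finset.range (n + 1), ((-1 : ℝ) ^ k / (2 * k)! * T (n - k))
      = (-1) ^ n / (2 * n + 1)! := by
  have hpi : (0 : ℝ) < Real.pi / 2 := half_pos Real.pi_pos
  have key := odd_unique (r := Real.pi / 2) hpi
    (a := fun n => ∑ k ∈ Finset.range (n + 1), ((-1 : ℝ) ^ k / (2 * k)! * T (n - k)))
    (b := fun n => (-1 : ℝ) ^ n / (2 * n + 1)!) (g := Real.sin) ?_ ?_
  · exact congrFun key n
  · intro t ht
    have hf : HasSum (fun k : ℕ => (-1 : ℝ) ^ k * t ^ (2 * k) / (2 * k)!) (Real.cos t) :=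
      Real.hasSum_cos t
    have hg : HasSum (fun m : ℕ => T m * t ^ (2 * m + 1)) (Real.tan t) := hT t ht
    have hf' := cos_norm_summable t
    have hg' : Summable fun m : ℕ => ‖T m * t ^ (2 * m + 1)‖ := by
      exact (aux_summable_abs hT ht).congr fun m => (Real.norm_eq_abs _).symm
    have hprod := summable_mul_of_summable_norm hf' hg'
    have hsum := summable_sum_mul_antidiagonal_of_summable_mul
      (f := fun k : ℕ => (-1 : ℝ) ^ k * t ^ (2 * k) / (2 * k)!)
      (g := fun m : ℕ => T m * t ^ (2 * m + 1)) hprod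
    have E := tsum_mul_tsum_eq_tsum_sum_antidiagonal_of_summable_norm hf' hg'
    rw [hf.tsum_eq, hg.tsum_eq] at E
    have hco : Real.cos t ≠ 0 := (Real.cos_pos_of_mem_Ioo ht).ne'
    have hct : Real.cos t * Real.tan t = Real.sin t := by
      rw [Real.tan_eq_sin_div_cos]; field_simp
    have final : HasSum
        (fun n => ∑ kl ∈ Finset.HasAntidiagonal.antidiagonal n,
          ((-1 : ℝ) ^ kl.1 * t ^ (2 * kl.1) / (2 * kl.1)!) * (T kl.2 * t ^ (2 * kl.2 + 1)))
        (Real.sin t) := by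
      have := hsum.hasSum
      rwa [← E, hct] at this
    refine final.congr_fun fun n => ?_
    rw [← Finset.Nat.sum_antidiagonal_eq_sum_range_succ
      (fun k l => ((-1 : ℝ) ^ k / (2 * k)! * T l)) n, Finset.sum_mul]
    refine Finset.sum_congr rfl fun kl hkl => ?_
    have hkln : kl.1 + kl.2 = n := Finset.HasAntidiagonal.mem_antidiagonal.mp hkl
    have hpow : t ^ (2 * kl.1) * t ^ (2 * kl.2 + 1) = t ^ (2 * n + 1) := by
      rw [← pow_add]; congr 1; omega
    calc ((-1 : ℝ) ^ kl.1 / (2 * kl.1)! * T kl.2) * t ^ (2 * n + 1)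
        = ((-1 : ℝ) ^ kl.1 / (2 * kl.1)! * T kl.2) * (t ^ (2 * kl.1) * t ^ (2 * kl.2 + 1)) := by
          rw [hpow]
      _ = ((-1 : ℝ) ^ kl.1 * t ^ (2 * kl.1) / (2 * kl.1)!) * (T kl.2 * t ^ (2 * kl.2 + 1)) := by
          ring
  · intro t ht
    exact (Real.hasSum_sin t).congr_fun fun n => by ring

/-- The explicit family of layer polynomials. -/
noncomputable def QQ (μ : ℝ) (T : ℕ → ℝ) (n : ℕ) : Polynomial ℝ :=
  Polynomial.C (μ * ((-1) ^ n / (2 * n + 1)!)) * Polynomial.X ^ (2 * n + 1) +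
  ∑ k ∈ Finset.range (n + 1),
    Polynomial.C (μ * ((-1) ^ k * T (n - k) / (2 * k)!)) * Polynomial.X ^ (2 * k)

lemma QQ_eval_zero (μ : ℝ) (T : ℕ → ℝ) (n : ℕ) : (QQ μ T n).eval 0 = μ * T n := by
  rw [QQ]
  simp only [Polynomial.eval_add, Polynomial.eval_mul, Polynomial.eval_C, Polynomial.eval_pow,
    Polynomial.eval_X, Polynomial.eval_finset_sum]
  rw [zero_pow (by omega : 2 * n + 1 ≠ 0), Finset.sum_eq_single 0]
  · norm_num
  · intro k _ hk
    rw [zero_pow (by omega : 2 * k ≠ 0)]; ring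
  · intro h
    exact absurd (Finset.mem_range.mpr (by omega)) h

lemma QQ_eval_neg_one {μ : ℝ} {T : ℕ → ℝ} {n : ℕ}
    (hs : ∑ k ∈ Finset.range (n + 1), ((-1 : ℝ) ^ k / (2 * k)! * T (n - k))
      = (-1) ^ n / (2 * n + 1)!) :
    (QQ μ T n).eval (-1) = 0 := by
  rw [QQ]
  simp only [Polynomial.eval_add, Polynomial.eval_mul, Polynomial.eval_C, Polynomial.eval_pow,
    Polynomial.eval_X, Polynomial.eval_finset_sum]
  have h1 : (-1 : ℝ) ^ (2 * n + 1) = -1 := Odd.neg_one_pow ⟨n, rfl⟩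
  have h3 : ∑ k ∈ Finset.range (n + 1),
      μ * ((-1 : ℝ) ^ k * T (n - k) / (2 * k)!) * (-1) ^ (2 * k)
      = μ * ((-1) ^ n / (2 * n + 1)!) := by
    rw [← hs, Finset.mul_sum]
    refine Finset.sum_congr rfl fun k _ => ?_
    have h2 : (-1 : ℝ) ^ (2 * k) = 1 := Even.neg_one_pow ⟨k, by ring⟩
    rw [h2]; ring
  rw [h1, h3]; ring

lemma QQ_coeff_one_succ (μ : ℝ) (T : ℕ → ℝ) (n : ℕ) : (QQ μ T (n + 1)).coeff 1 = 0 := by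
  rw [QQ]
  simp only [Polynomial.coeff_add, Polynomial.coeff_C_mul, Polynomial.coeff_X_pow,
    Polynomial.finset_sum_coeff]
  rw [if_neg (by omega)]
  rw [Finset.sum_eq_zero fun k _ => by rw [if_neg (by omega : ¬(1 = 2 * k))]; ring]
  ring

lemma QQ_deriv_eval0_succ (μ : ℝ) (T : ℕ → ℝ) (n : ℕ) :
    (Polynomial.derivative (QQ μ T (n + 1))).eval 0 = 0 := by
  rw [← Polynomial.coeff_zero_eq_eval_zero, Polynomial.coeff_derivative, QQ_coeff_one_succ]
  ring

lemma QQ_deriv_eval0_zero (μ : ℝ) (T : ℕ → ℝ) :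
    (Polynomial.derivative (QQ μ T 0)).eval 0 = μ := by
  rw [← Polynomial.coeff_zero_eq_eval_zero, Polynomial.coeff_derivative]
  rw [QQ]
  simp only [Polynomial.coeff_add, Polynomial.coeff_C_mul, Polynomial.coeff_X_pow,
    Polynomial.finset_sum_coeff]
  norm_num

lemma QQ_dd_zero (μ : ℝ) (T : ℕ → ℝ) :
    Polynomial.derivative (Polynomial.derivative (QQ μ T 0)) = 0 := by
  rw [QQ]
  norm_num [Finset.sum_range_one, Polynomial.derivative_C_mul_X_pow]

lemma dd_term (b : ℝ) (j : ℕ) :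
    Polynomial.derivative (Polynomial.derivative (Polynomial.C b * Polynomial.X ^ (2 * j + 2)))
      = Polynomial.C (b * (2 * j + 2) * (2 * j + 1)) * Polynomial.X ^ (2 * j) := by
  rw [Polynomial.derivative_C_mul_X_pow, show 2 * j + 2 - 1 = 2 * j + 1 from by omega,
    Polynomial.derivative_C_mul_X_pow, show 2 * j + 1 - 1 = 2 * j from by omega]
  congr 1
  push_cast
  ring

lemma QQ_dd_succ (μ : ℝ) (T : ℕ → ℝ) (n : ℕ) :
    Polynomial.derivative (Polynomial.derivative (QQ μ T (n + 1))) = -(QQ μ T n) := by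
  have hrw : QQ μ T (n + 1) =
      Polynomial.C (μ * ((-1) ^ (n + 1) / (2 * (n + 1) + 1)!)) *
        Polynomial.X ^ (2 * (n + 1) + 1)
      + ((∑ j ∈ Finset.range (n + 1),
          Polynomial.C (μ * ((-1) ^ (j + 1) * T (n + 1 - (j + 1)) / (2 * (j + 1))!)) *
            Polynomial.X ^ (2 * (j + 1)))
        + Polynomial.C (μ * ((-1) ^ 0 * T (n + 1 - 0) / (2 * 0)!)) *
            Polynomial.X ^ (2 * 0)) := by
    rw [QQ, Finset.sum_range_succ']
  rw [hrw]
  simp only [Polynomial.derivative_add, Polynomial.derivative_sum]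
  have hterm0 : Polynomial.derivative (Polynomial.derivative
      (Polynomial.C (μ * ((-1 : ℝ) ^ 0 * T (n + 1 - 0) / (2 * 0)!)) *
        Polynomial.X ^ (2 * 0))) = 0 := by
    simp
  rw [hterm0, add_zero]
  have hfacpos : ∀ m : ℕ, ((m)! : ℝ) ≠ 0 := fun m => Nat.cast_ne_zero.mpr (Nat.factorial_ne_zero m)
  have hA : Polynomial.derivative (Polynomial.derivative
      (Polynomial.C (μ * ((-1 : ℝ) ^ (n + 1) / (2 * (n + 1) + 1)!)) *
        Polynomial.X ^ (2 * (n + 1) + 1)))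
      = Polynomial.C (-(μ * ((-1 : ℝ) ^ n / (2 * n + 1)!))) * Polynomial.X ^ (2 * n + 1) := by
    rw [show 2 * (n + 1) + 1 = 2 * n + 3 from by omega]
    rw [Polynomial.derivative_C_mul_X_pow, show 2 * n + 3 - 1 = 2 * n + 2 from by omega,
      Polynomial.derivative_C_mul_X_pow, show 2 * n + 2 - 1 = 2 * n + 1 from by omega]
    congr 1
    have hfac : ((2 * n + 3)! : ℝ) = (2 * n + 3) * ((2 * n + 2) * (2 * n + 1)!) := by
      rw [show 2 * n + 3 = (2 * n + 2) + 1 from by omega, Nat.factorial_succ,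
        show 2 * n + 2 = (2 * n + 1) + 1 from by omega, Nat.factorial_succ]
      push_cast; ring
    rw [hfac, pow_succ]
    push_cast
    field_simp
  rw [hA]
  have hS : ∀ j ∈ Finset.range (n + 1),
      Polynomial.derivative (Polynomial.derivative
        (Polynomial.C (μ * ((-1 : ℝ) ^ (j + 1) * T (n + 1 - (j + 1)) / (2 * (j + 1))!)) *
          Polynomial.X ^ (2 * (j + 1))))
      = Polynomial.C (-(μ * ((-1 : ℝ) ^ j * T (n - j) / (2 * j)!))) *
          Polynomial.X ^ (2 * j) := by
    intro j _
    rw [show 2 * (j + 1) = 2 * j + 2 from by omega, dd_term,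
      show n + 1 - (j + 1) = n - j from by omega]
    congr 1
    have hfac : ((2 * j + 2)! : ℝ) = (2 * j + 2) * ((2 * j + 1) * (2 * j)!) := by
      rw [show 2 * j + 2 = (2 * j + 1) + 1 from by omega, Nat.factorial_succ,
        show 2 * j + 1 = (2 * j) + 1 from by omega, Nat.factorial_succ]
      push_cast; ring
    rw [hfac, pow_succ]
    push_cast
    field_simp
  rw [Finset.sum_congr rfl hS, QQ]
  simp only [map_neg, neg_mul, neg_add, ← Finset.sum_neg_distrib]

/-- The unique polynomial sequence satisfying the layer conditions. -/
lemma triv_zero {p : Polynomial ℝ}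
    (h2 : Polynomial.derivative (Polynomial.derivative p) = 0)
    (h1 : (Polynomial.derivative p).eval 0 = 0) (h0 : p.eval (-1) = 0) : p = 0 := by
  have hd : Polynomial.derivative p = Polynomial.C ((Polynomial.derivative p).coeff 0) :=
    Polynomial.eq_C_of_derivative_eq_zero h2
  rw [Polynomial.coeff_zero_eq_eval_zero, h1, Polynomial.C_0] at hd
  have hp : p = Polynomial.C (p.coeff 0) := Polynomial.eq_C_of_derivative_eq_zero hd
  rw [hp] at h0 ⊢
  rw [Polynomial.eval_C] at h0
  rw [h0, Polynomial.C_0]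

lemma layer_unique {μ₀ μ₁ : ℝ} {U V : ℕ → Polynomial ℝ}
    (hU : LayerCond μ₀ μ₁ U) (hV : LayerCond μ₀ μ₁ V) : U = V := by
  obtain ⟨hU2, hU1, hU0, hUn⟩ := hU
  obtain ⟨hV2, hV1, hV0, hVn⟩ := hV
  funext n
  induction n with
  | zero =>
    have h := triv_zero (p := U 0 - V 0) ?_ ?_ ?_
    · exact sub_eq_zero.mp h
    · simp [Polynomial.derivative_sub, hU2, hV2]
    · simp [Polynomial.derivative_sub, hU1, hV1]
    · simp [hU0, hV0]
  | succ n ih =>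
    have h := triv_zero (p := U (n + 1) - V (n + 1)) ?_ ?_ ?_
    · exact sub_eq_zero.mp h
    · simp [Polynomial.derivative_sub, (hUn n).1, (hVn n).1, ih]
    · simp [Polynomial.derivative_sub, (hUn n).2.1, (hVn n).2.1]
    · simp [(hUn n).2.2, (hVn n).2.2]

end Stmt11Aux

/-- There is a unique sequence of real polynomials `(𝒰ₙ)` satisfying the layer
recursion; for it, `Σₙ 𝒰ₙ(Y) t^{2n+1} = (μ₀/μ₁) sin(t(Y+1))/cos(t)` for
`Y ∈ (-1,0)`, `t ∈ (-π/2,π/2)`; in particular `𝒰ₙ(0) = (μ₀/μ₁) Tₙ` where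
`(Tₙ)` are the Maclaurin coefficients of `tan`. -/
theorem stmt11 (μ₀ μ₁ : ℝ) (h₀ : 0 < μ₀) (h₁ : 0 < μ₁)
    (T : ℕ → ℝ)
    (hT : ∀ t ∈ Set.Ioo (-(Real.pi / 2)) (Real.pi / 2),
      HasSum (fun n : ℕ => T n * t ^ (2 * n + 1)) (Real.tan t)) :
    (∃! U : ℕ → Polynomial ℝ, LayerCond μ₀ μ₁ U) ∧
    ∀ U : ℕ → Polynomial ℝ, LayerCond μ₀ μ₁ U →
      (∀ Y ∈ Set.Ioo (-1 : ℝ) 0, ∀ t ∈ Set.Ioo (-(Real.pi / 2)) (Real.pi / 2),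
        HasSum (fun n : ℕ => (U n).eval Y * t ^ (2 * n + 1))
          ((μ₀ / μ₁) * (Real.sin (t * (Y + 1)) / Real.cos t))) ∧
      ∀ n : ℕ, (U n).eval 0 = (μ₀ / μ₁) * T n := by
  classical
  have hs : ∀ n, ∑ k ∈ Finset.range (n + 1), ((-1 : ℝ) ^ k / (2 * k)! * T (n - k))
      = (-1) ^ n / (2 * n + 1)! := Stmt11Aux.tan_coeff hT
  set μ : ℝ := μ₀ / μ₁ with hμ
  have hQ : LayerCond μ₀ μ₁ (Stmt11Aux.QQ μ T) := by
    refine ⟨Stmt11Aux.QQ_dd_zero μ T, ?_, Stmt11Aux.QQ_eval_neg_one (hs 0), fun n =>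
      ⟨Stmt11Aux.QQ_dd_succ μ T n, Stmt11Aux.QQ_deriv_eval0_succ μ T n,
        Stmt11Aux.QQ_eval_neg_one (hs (n + 1))⟩⟩
    rw [Stmt11Aux.QQ_deriv_eval0_zero μ T]
  refine ⟨⟨Stmt11Aux.QQ μ T, hQ, fun V hV => Stmt11Aux.layer_unique hV hQ⟩, ?_⟩
  intro U hU
  have hUQ : U = Stmt11Aux.QQ μ T := Stmt11Aux.layer_unique hU hQ
  subst hUQ
  constructor
  · intro Y hY t ht
    have hcos : (0 : ℝ) < Real.cos t := Real.cos_pos_of_mem_Ioo ht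
    have htarget : μ * (Real.sin (t * (Y + 1)) / Real.cos t)
        = μ * Real.sin (t * Y) + μ * (Real.cos (t * Y) * Real.tan t) := by
      rw [show t * (Y + 1) = t * Y + t from by ring, Real.sin_add, Real.tan_eq_sin_div_cos]
      field_simp
    rw [htarget]
    have part1 : HasSum
        (fun n : ℕ => μ * ((-1 : ℝ) ^ n / (2 * n + 1)!) * Y ^ (2 * n + 1) * t ^ (2 * n + 1))
        (μ * Real.sin (t * Y)) := by
      refine ((Real.hasSum_sin (t * Y)).mul_left μ).congr_fun fun n => ?_
      rw [mul_pow]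
      ring
    have part2 : HasSum
        (fun n : ℕ => (∑ k ∈ Finset.range (n + 1),
            μ * ((-1 : ℝ) ^ k * T (n - k) / (2 * k)!) * Y ^ (2 * k)) * t ^ (2 * n + 1))
        (μ * (Real.cos (t * Y) * Real.tan t)) := by
      have hf : HasSum (fun k : ℕ => μ * ((-1 : ℝ) ^ k * (t * Y) ^ (2 * k) / (2 * k)!))
          (μ * Real.cos (t * Y)) := (Real.hasSum_cos (t * Y)).mul_left μ
      have hg : HasSum (fun m : ℕ => T m * t ^ (2 * m + 1)) (Real.tan t) := hT t ht
      have hf' : Summable fun k : ℕ =>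
          ‖μ * ((-1 : ℝ) ^ k * (t * Y) ^ (2 * k) / (2 * k)!)‖ := by
        refine ((Stmt11Aux.cos_norm_summable (t * Y)).mul_left ‖μ‖).congr fun k => ?_
        rw [norm_mul]
      have hg' : Summable fun m : ℕ => ‖T m * t ^ (2 * m + 1)‖ :=
        (Stmt11Aux.aux_summable_abs hT ht).congr fun m => (Real.norm_eq_abs _).symm
      have hprod := summable_mul_of_summable_norm hf' hg'
      have hsum := summable_sum_mul_antidiagonal_of_summable_mul
        (f := fun k : ℕ => μ * ((-1 : ℝ) ^ k * (t * Y) ^ (2 * k) / (2 * k)!))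
        (g := fun m : ℕ => T m * t ^ (2 * m + 1)) hprod
      have E := tsum_mul_tsum_eq_tsum_sum_antidiagonal_of_summable_norm hf' hg'
      rw [hf.tsum_eq, hg.tsum_eq] at E
      have final : HasSum
          (fun n => ∑ kl ∈ Finset.HasAntidiagonal.antidiagonal n,
            (μ * ((-1 : ℝ) ^ kl.1 * (t * Y) ^ (2 * kl.1) / (2 * kl.1)!)) *
              (T kl.2 * t ^ (2 * kl.2 + 1)))
          (μ * (Real.cos (t * Y) * Real.tan t)) := by
        have h := hsum.hasSum
        rwa [← E, mul_assoc] at h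
      refine final.congr_fun fun n => ?_
      rw [← Finset.Nat.sum_antidiagonal_eq_sum_range_succ
        (fun k l => μ * ((-1 : ℝ) ^ k * T l / (2 * k)!) * Y ^ (2 * k)) n, Finset.sum_mul]
      refine Finset.sum_congr rfl fun kl hkl => ?_
      have hkln : kl.1 + kl.2 = n := Finset.HasAntidiagonal.mem_antidiagonal.mp hkl
      have hpow : t ^ (2 * kl.1) * t ^ (2 * kl.2 + 1) = t ^ (2 * n + 1) := by
        rw [← pow_add]; congr 1; omega
      calc μ * ((-1 : ℝ) ^ kl.1 * T kl.2 / (2 * kl.1)!) * Y ^ (2 * kl.1) * t ^ (2 * n + 1)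
          = μ * ((-1 : ℝ) ^ kl.1 * T kl.2 / (2 * kl.1)!) * Y ^ (2 * kl.1) *
              (t ^ (2 * kl.1) * t ^ (2 * kl.2 + 1)) := by rw [hpow]
        _ = (μ * ((-1 : ℝ) ^ kl.1 * (t * Y) ^ (2 * kl.1) / (2 * kl.1)!)) *
              (T kl.2 * t ^ (2 * kl.2 + 1)) := by rw [mul_pow]; ring
    refine (part1.add part2).congr_fun fun n => ?_
    have heval : (Stmt11Aux.QQ μ T n).eval Y
        = μ * ((-1 : ℝ) ^ n / (2 * n + 1)!) * Y ^ (2 * n + 1) +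
          ∑ k ∈ Finset.range (n + 1),
            μ * ((-1 : ℝ) ^ k * T (n - k) / (2 * k)!) * Y ^ (2 * k) := by
      rw [Stmt11Aux.QQ]
      simp [Polynomial.eval_finset_sum]
    rw [heval, add_mul, Finset.sum_mul]
  · intro n
    exact Stmt11Aux.QQ_eval_zero μ T n
end

section
/- Let (q, k) ∈ ℝ × ℕ and let 𝒫(q,k,P) denote the property (q ∉ ℕ or q > k or P(0) = 0). Then the map sending a real polynomial P satisfying 𝒫(q,k,P) to the function Ω → ℝ, z ↦ Im((αz)^q · conj(αz)^k · P(log(αz))), is injective. Equivalently: if Im((αz)^q conj(αz)^k P(log(αz))) = 0 for all z in the sector Ω, and 𝒫(q,k,P) holds, then P = 0. -/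
open Polynomial Complex


open Set

/-- Lemma 2.3 (injectivity): let `(q,k) ∈ ℝ × ℕ` and suppose the property
`𝒫(q,k,P) = (q ∉ ℕ ∨ q > k ∨ P(0) = 0)` holds. If
`Im((αz)^q conj(αz)^k P(log(αz))) = r^{q+k} Im(e^{i(q-k)(θ-Θ)} P(ln r + i(θ-Θ)))`
vanishes for all `r > 0` and `θ ∈ (0,Θ)`, then `P = 0`. -/
theorem stmt18 (Θ : ℝ) (hΘ : 0 < Θ) (hΘ2 : Θ < 2 * Real.pi)
    (q : ℝ) (k : ℕ) (P : Polynomial ℝ)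
    (hP : (¬ ∃ n : ℕ, q = n) ∨ (k : ℝ) < q ∨ P.eval 0 = 0)
    (hvanish : ∀ r : ℝ, 0 < r → ∀ θ ∈ Set.Ioo (0 : ℝ) Θ,
      (((r ^ (q + (k : ℝ)) : ℝ) : ℂ) *
        Complex.exp (Complex.I * ((q : ℂ) - (k : ℂ)) * ((θ : ℂ) - (Θ : ℂ))) *
        (P.map (algebraMap ℝ ℂ)).eval
          (((Real.log r : ℝ) : ℂ) + Complex.I * ((θ : ℂ) - (Θ : ℂ)))).im = 0) :
    P = 0 := by
  set Pc := P.map (algebraMap ℝ ℂ) with hPc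
  -- conjugation of evaluation of a real polynomial
  have hconj : ∀ z : ℂ, (starRingEnd ℂ) (Pc.eval z) = Pc.eval ((starRingEnd ℂ) z) := by
    intro z
    rw [hPc, Polynomial.eval_map, Polynomial.eval_map, Polynomial.hom_eval₂]
    congr 1
    ext x
    simp [Complex.conj_ofReal]
  -- zero imaginary part on rays
  have him : ∀ w ∈ Set.Ioo (-Θ) (0:ℝ), ∀ x : ℝ,
      (Complex.exp (Complex.I * ((q:ℂ) - (k:ℂ)) * (w:ℂ)) *
        Pc.eval ((x:ℂ) + Complex.I * (w:ℂ))).im = 0 := by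
    intro w hw x
    have h := hvanish (Real.exp x) (Real.exp_pos x) (Θ + w) ⟨by linarith [hw.1], by linarith [hw.2]⟩
    rw [Real.log_exp] at h
    have hco : ((Θ + w : ℝ) : ℂ) - (Θ : ℂ) = (w : ℂ) := by push_cast; ring
    rw [hco] at h
    have hne : (Real.exp x) ^ (q + (k:ℝ)) ≠ 0 := ne_of_gt (Real.rpow_pos_of_pos (Real.exp_pos x) _)
    rw [mul_assoc] at h
    simpa [hne] using h
  -- key polynomial identity per ray
  have keyA : ∀ w ∈ Set.Ioo (-Θ) (0:ℝ),
      Polynomial.C (Complex.exp (Complex.I * ((q:ℂ) - (k:ℂ)) * (w:ℂ))) *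
        Pc.comp (Polynomial.X + Polynomial.C (Complex.I * (w:ℂ)))
      = Polynomial.C (Complex.exp (-(Complex.I * ((q:ℂ) - (k:ℂ)) * (w:ℂ)))) *
        Pc.comp (Polynomial.X - Polynomial.C (Complex.I * (w:ℂ))) := by
    intro w hw
    apply Polynomial.eq_of_infinite_eval_eq
    apply Set.Infinite.mono (s := Set.range ((↑) : ℝ → ℂ))
    · rintro _ ⟨x, rfl⟩
      simp only [Set.mem_setOf_eq, Polynomial.eval_mul, Polynomial.eval_C,
        Polynomial.eval_comp, Polynomial.eval_add, Polynomial.eval_sub, Polynomial.eval_X]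
      have h0 := him w hw x
      have hcz : (starRingEnd ℂ) (Complex.exp (Complex.I * ((q:ℂ) - (k:ℂ)) * (w:ℂ)) *
          Pc.eval ((x:ℂ) + Complex.I * (w:ℂ)))
        = Complex.exp (Complex.I * ((q:ℂ) - (k:ℂ)) * (w:ℂ)) *
          Pc.eval ((x:ℂ) + Complex.I * (w:ℂ)) := Complex.conj_eq_iff_im.mpr h0
      rw [map_mul, ← Complex.exp_conj, hconj] at hcz
      have e1 : (starRingEnd ℂ) (Complex.I * ((q:ℂ) - (k:ℂ)) * (w:ℂ))
          = -(Complex.I * ((q:ℂ) - (k:ℂ)) * (w:ℂ)) := by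
        simp only [map_mul, Complex.conj_I, Complex.conj_ofReal, map_sub, map_natCast]
        ring
      have e2 : (starRingEnd ℂ) ((x:ℂ) + Complex.I * (w:ℂ)) = (x:ℂ) - Complex.I * (w:ℂ) := by
        simp [map_add, map_mul, Complex.conj_ofReal]
        ring
      rw [e1, e2] at hcz
      exact hcz.symm
    · exact Set.infinite_range_of_injective Complex.ofReal_injective
  -- if P ≠ 0 and q ≠ k we get a contradiction, hence q = k
  by_cases hP0 : P = 0
  · exact hP0
  have hPc0 : Pc ≠ 0 := by
    simpa [hPc, Polynomial.map_eq_zero_iff (algebraMap ℝ ℂ).injective] using hP0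
  have hqk : q = (k : ℝ) := by
    by_contra hqk
    set w : ℝ := -(min Θ (Real.pi / |q - k|)) / 2 with hwdef
    have hd : q - (k:ℝ) ≠ 0 := sub_ne_zero.mpr hqk
    have habs : 0 < |q - k| := abs_pos.mpr hd
    have hmin : 0 < min Θ (Real.pi / |q - k|) :=
      lt_min hΘ (div_pos Real.pi_pos habs)
    have hwI : w ∈ Set.Ioo (-Θ) (0:ℝ) := by
      constructor
      · have : min Θ (Real.pi / |q - k|) ≤ Θ := min_le_left _ _
        rw [hwdef]; linarith
      · rw [hwdef]; linarith
    have hA := keyA w hwI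
    -- compare leading coefficients
    have hlc := congrArg Polynomial.leadingCoeff hA
    have hnd1 : (Polynomial.X + Polynomial.C (Complex.I * (w:ℂ))).natDegree ≠ 0 := by
      rw [Polynomial.natDegree_X_add_C]; norm_num
    have hnd2 : (Polynomial.X - Polynomial.C (Complex.I * (w:ℂ))).natDegree ≠ 0 := by
      rw [Polynomial.natDegree_X_sub_C]; norm_num
    rw [Polynomial.leadingCoeff_mul, Polynomial.leadingCoeff_mul,
      Polynomial.leadingCoeff_comp hnd1, Polynomial.leadingCoeff_comp hnd2,
      Polynomial.leadingCoeff_C, Polynomial.leadingCoeff_C,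
      Polynomial.leadingCoeff_X_add_C, Polynomial.leadingCoeff_X_sub_C] at hlc
    have hlcne : Pc.leadingCoeff ≠ 0 := Polynomial.leadingCoeff_ne_zero.mpr hPc0
    have hexp : Complex.exp (Complex.I * ((q:ℂ) - (k:ℂ)) * (w:ℂ))
        = Complex.exp (-(Complex.I * ((q:ℂ) - (k:ℂ)) * (w:ℂ))) := by
      field_simp at hlc
      exact hlc
    have hone : Complex.exp (Complex.I * ((q:ℂ) - (k:ℂ)) * (w:ℂ) +
        Complex.I * ((q:ℂ) - (k:ℂ)) * (w:ℂ)) = 1 := by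
      rw [Complex.exp_add]
      nth_rewrite 2 [hexp]
      rw [← Complex.exp_add]
      simp
    rw [Complex.exp_eq_one_iff] at hone
    obtain ⟨n, hn⟩ := hone
    set u : ℝ := (q - k) * w with hudef
    have hu : (2 * u : ℝ) = n * (2 * Real.pi) := by
      have hcc : Complex.I * ((2 * u : ℝ) : ℂ)
          = Complex.I * (((n : ℝ) * (2 * Real.pi) : ℝ) : ℂ) := by
        rw [hudef]
        push_cast
        linear_combination hn
      have h2 := mul_left_cancel₀ Complex.I_ne_zero hcc
      exact_mod_cast h2
    have hun : u = n * Real.pi := by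
      have hpi := Real.pi_ne_zero
      nlinarith [Real.pi_pos]
    have hu0 : u ≠ 0 := mul_ne_zero hd (ne_of_lt hwI.2)
    have habsu : |u| < Real.pi := by
      rw [hudef, abs_mul]
      have hwabs : |w| = min Θ (Real.pi / |q - k|) / 2 := by
        rw [hwdef, abs_div, abs_neg, abs_of_pos hmin]
        norm_num
      have : |q - k| * |w| ≤ |q - k| * ((Real.pi / |q - k|) / 2) := by
        apply mul_le_mul_of_nonneg_left _ (le_of_lt habs)
        rw [hwabs]
        gcongr
        exact min_le_right _ _
      calc |q - ↑k| * |w| ≤ |q - k| * ((Real.pi / |q - k|) / 2) := this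
        _ = Real.pi / 2 := by field_simp
        _ < Real.pi := by linarith [Real.pi_pos]
    have hn0 : n = 0 := by
      by_contra hn0
      have : (1 : ℝ) ≤ |(n : ℝ)| := by
        have := Int.one_le_abs (by exact_mod_cast hn0 : n ≠ 0)
        exact_mod_cast this
      have : Real.pi ≤ |u| := by
        rw [hun, abs_mul, abs_of_pos Real.pi_pos]
        nlinarith [Real.pi_pos]
      linarith
    rw [hn0] at hun
    simp at hun
    exact hu0 hun
  -- now q = k: deduce P(0) = 0 and use the identity to show P is constant
  have heval0 : P.eval 0 = 0 := by
    rcases hP with h | h | h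
    · exact absurd ⟨k, hqk⟩ h
    · rw [hqk] at h; exact absurd h (lt_irrefl _)
    · exact h
  have hc0 : ((q:ℂ) - (k:ℂ)) = 0 := by
    rw [sub_eq_zero]
    exact_mod_cast hqk
  have keyB : ∀ w ∈ Set.Ioo (-Θ) (0:ℝ),
      Pc.eval (Complex.I * (w:ℂ) + Complex.I * (w:ℂ)) = Pc.eval 0 := by
    intro w hw
    have hA := keyA w hw
    rw [hc0] at hA
    simp only [mul_zero, zero_mul, neg_zero, Complex.exp_zero, Polynomial.C_1, one_mul] at hA
    have := congrArg (Polynomial.eval (Complex.I * (w:ℂ))) hA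
    simpa [Polynomial.eval_comp] using this
  have hPcC : Pc = Polynomial.C (Pc.eval 0) := by
    apply Polynomial.eq_of_infinite_eval_eq
    apply Set.Infinite.mono
      (s := (fun w : ℝ => Complex.I * (w:ℂ) + Complex.I * (w:ℂ)) '' (Set.Ioo (-Θ) 0))
    · rintro _ ⟨w, hw, rfl⟩
      simp only [Set.mem_setOf_eq, Polynomial.eval_C]
      exact keyB w hw
    · apply Set.Infinite.image
      · intro a _ b _ hab
        have h2 : Complex.I * ((a:ℂ) - (b:ℂ)) * 2 = 0 := by linear_combination hab
        simp only [mul_eq_zero, Complex.I_ne_zero, sub_eq_zero, false_or,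
          OfNat.ofNat_ne_zero, or_false] at h2
        exact_mod_cast h2
      · exact Set.Ioo_infinite (by linarith : (-Θ : ℝ) < 0)
  have hPc00 : Pc.eval 0 = 0 := by
    rw [hPc, Polynomial.eval_map]
    have : Polynomial.eval₂ (algebraMap ℝ ℂ) 0 P = algebraMap ℝ ℂ (P.eval 0) := by
      rw [← Polynomial.eval₂_at_apply]
      simp
    rw [this, heval0, map_zero]
  rw [hPc00, Polynomial.C_0] at hPcC
  exact absurd hPcC hPc0
end
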